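/- Bounded distortion for one-dimensional expanding maps: let f be a C^{1+θ}-type map on an interval (or 1-dimensional Riemannian manifold) with σ₁ ≤ f'(z) ≤ σ₂ for constants σ₁ > 1, σ₂, and suppose log f' is θ-Hölder with constant ℓ. If z₁, z₂ are points such that d(f^i(z₁), f^i(z₂)) ≤ c/σ₁^{k−i} for all 0 ≤ i ≤ k, then 1/K ≤ (f^k)'(z₁)/(f^k)'(z₂) ≤ K, where K = exp(ℓ·c^θ/(σ₁^θ − 1)). -/

import Mathlib

theorem stmt4 (f f' : ℝ → ℝ) (hder : ∀ z, HasDerivAt f (f' z) z)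
    (σ₁ σ₂ ℓ θ c : ℝ) (hσ₁ : 1 < σ₁) (hσ : ∀ z, σ₁ ≤ f' z ∧ f' z ≤ σ₂)
    (hθ : 0 < θ) (hθ1 : θ < 1) (hℓ : 0 < ℓ) (hc : 0 < c)
    (hHolder : ∀ w₁ w₂ : ℝ, |w₁ - w₂| ≤ c →
      |Real.log (f' w₁) - Real.log (f' w₂)| ≤ ℓ * |w₁ - w₂| ^ θ)
    (k : ℕ) (z₁ z₂ : ℝ)
    (hclose : ∀ i ≤ k, |f^[i] z₁ - f^[i] z₂| ≤ c / σ₁ ^ (k - i)) :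
    (Real.exp (ℓ * c ^ θ / (σ₁ ^ θ - 1)))⁻¹ ≤
        (∏ i ∈ Finset.range k, f' (f^[i] z₁)) / (∏ i ∈ Finset.range k, f' (f^[i] z₂)) ∧
      (∏ i ∈ Finset.range k, f' (f^[i] z₁)) / (∏ i ∈ Finset.range k, f' (f^[i] z₂)) ≤
        Real.exp (ℓ * c ^ θ / (σ₁ ^ θ - 1)) := by
  have hσ₁0 : (0:ℝ) < σ₁ := lt_trans one_pos hσ₁
  have hf'pos : ∀ z, 0 < f' z := fun z => lt_of_lt_of_le (lt_trans one_pos hσ₁) (hσ z).1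
  set s : ℝ := σ₁ ^ θ with hs
  have hs1 : 1 < s := Real.one_lt_rpow_iff_of_pos hσ₁0 |>.2 (Or.inl ⟨hσ₁, hθ⟩)
  have hs0 : 0 < s := lt_trans one_pos hs1
  set S : ℝ := ℓ * c ^ θ / (s - 1) with hS
  -- product positivity
  have hP1 : 0 < ∏ i ∈ Finset.range k, f' (f^[i] z₁) :=
    Finset.prod_pos fun i _ => hf'pos _
  have hP2 : 0 < ∏ i ∈ Finset.range k, f' (f^[i] z₂) :=
    Finset.prod_pos fun i _ => hf'pos _
  -- key log estimate
  have key : |Real.log (∏ i ∈ Finset.range k, f' (f^[i] z₁)) -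
      Real.log (∏ i ∈ Finset.range k, f' (f^[i] z₂))| ≤ S := by
    rw [Real.log_prod (fun i _ => (hf'pos _).ne'),
        Real.log_prod (fun i _ => (hf'pos _).ne'), ← Finset.sum_sub_distrib]
    calc |∑ i ∈ Finset.range k,
          (Real.log (f' (f^[i] z₁)) - Real.log (f' (f^[i] z₂)))|
        ≤ ∑ i ∈ Finset.range k,
          |Real.log (f' (f^[i] z₁)) - Real.log (f' (f^[i] z₂))| :=
          Finset.abs_sum_le_sum_abs _ _
      _ ≤ ∑ i ∈ Finset.range k, ℓ * c ^ θ / s ^ (k - i) := by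
          apply Finset.sum_le_sum
          intro i hi
          have hik : i ≤ k := le_of_lt (Finset.mem_range.1 hi)
          have hd := hclose i hik
          have hσpow : (1:ℝ) ≤ σ₁ ^ (k - i) := one_le_pow₀ hσ₁.le
          have hdc : |f^[i] z₁ - f^[i] z₂| ≤ c :=
            hd.trans (div_le_self hc.le hσpow)
          calc |Real.log (f' (f^[i] z₁)) - Real.log (f' (f^[i] z₂))|
              ≤ ℓ * |f^[i] z₁ - f^[i] z₂| ^ θ := hHolder _ _ hdc
            _ ≤ ℓ * (c / σ₁ ^ (k - i)) ^ θ := by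
                exact mul_le_mul_of_nonneg_left
                  (Real.rpow_le_rpow (abs_nonneg _) hd hθ.le) hℓ.le
            _ = ℓ * c ^ θ / s ^ (k - i) := by
                rw [Real.div_rpow hc.le (by positivity), mul_div_assoc]
                congr 2
                rw [← Real.rpow_natCast σ₁ (k - i), ← Real.rpow_natCast s (k - i),
                  hs, ← Real.rpow_mul hσ₁0.le, ← Real.rpow_mul hσ₁0.le, mul_comm]
      _ ≤ S := by
          have hre : ∑ i ∈ Finset.range k, ℓ * c ^ θ / s ^ (k - i)
              = ℓ * c ^ θ * ∑ j ∈ Finset.range k, (1 / s) ^ (j + 1) := by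
            rw [Finset.mul_sum]
            rw [← Finset.sum_range_reflect]
            apply Finset.sum_congr rfl
            intro j hj
            have hjk : j < k := Finset.mem_range.1 hj
            have : k - (k - 1 - j) = j + 1 := by omega
            rw [this, one_div, inv_pow, div_eq_mul_inv]
          rw [hre, hS]
          have hgeom : ∑ j ∈ Finset.range k, (1 / s) ^ (j + 1) ≤ 1 / (s - 1) := by
            have hr0 : (0:ℝ) < 1 / s := by positivity
            have hr1 : 1 / s < 1 := by
              rw [div_lt_one hs0]; exact hs1
            have : ∑ j ∈ Finset.range k, (1 / s) ^ (j + 1)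
                = (1 / s) * ∑ j ∈ Finset.range k, (1 / s) ^ j := by
              rw [Finset.mul_sum]; exact Finset.sum_congr rfl fun j _ => by ring
            rw [this]
            have hsum : ∑ j ∈ Finset.range k, (1 / s) ^ j ≤ 1 / (1 - 1 / s) := by
              rw [geom_sum_eq (ne_of_lt hr1) k,
                show ((1 / s) ^ k - 1) / (1 / s - 1) = (1 - (1 / s) ^ k) / (1 - 1 / s) from by
                  rw [← neg_div_neg_eq]; ring_nf]
              gcongr
              · nlinarith [pow_pos hr0 k]
            calc (1 / s) * ∑ j ∈ Finset.range k, (1 / s) ^ j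
                ≤ (1 / s) * (1 / (1 - 1 / s)) := by
                  exact mul_le_mul_of_nonneg_left hsum hr0.le
              _ = 1 / (s - 1) := by
                  field_simp
          rw [div_eq_mul_inv (ℓ * c ^ θ), ← one_div]
          exact mul_le_mul_of_nonneg_left hgeom (by positivity)
  have habs := abs_le.1 key
  have hratio : (∏ i ∈ Finset.range k, f' (f^[i] z₁)) /
      (∏ i ∈ Finset.range k, f' (f^[i] z₂)) =
      Real.exp (Real.log (∏ i ∈ Finset.range k, f' (f^[i] z₁)) -
        Real.log (∏ i ∈ Finset.range k, f' (f^[i] z₂))) := by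
    rw [Real.exp_sub, Real.exp_log hP1, Real.exp_log hP2]
  constructor
  · rw [hratio, ← Real.exp_neg]
    exact Real.exp_le_exp.2 (by linarith [habs.1])
  · rw [hratio]
    exact Real.exp_le_exp.2 habs.2
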